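/- In an unambiguous NFA A with single final state, for any word w ∈ L(A) and any prefix decomposition w = u·a, the state reached after reading u in the (unique) accepting run is uniquely determined; hence in the shortest-path DAG of G×, backtracking from (v', q_F) yields runs of A that are the unique accepting runs on the corresponding path labels (no duplicate paths arise from run ambiguity). -/

import Mathlib

/-- A graph database: edges with source, target, and label. -/
structure GraphDB (V E S : Type) where
  src : E → V
  tgt : E → V
  lab : E → S

/-- An NFA with transition relation `δ ⊆ Q × Σ × Q`, initial state `q0`, final states `F`. -/
structure NFAx (Q S : Type) where
  δ : Set (Q × S × Q)
  q0 : Q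
  F : Set Q

/-- `A.Run q w q'`: the automaton can read word `w` going from state `q` to state `q'`. -/
inductive NFAx.Run {Q S : Type} (A : NFAx Q S) : Q → List S → Q → Prop
  | nil (q : Q) : A.Run q [] q
  | cons {q q' q'' : Q} {a : S} {w : List S} :
      (q, a, q') ∈ A.δ → A.Run q' w q'' → A.Run q (a :: w) q''

/-- The language accepted by the NFA. -/
def NFAx.Lang {Q S : Type} (A : NFAx Q S) : Set (List S) :=
  {w | ∃ qf ∈ A.F, A.Run A.q0 w qf}

/-- `G.IsWalk v es w`: the edge list `es` forms a walk from `v` to `w` in `G`. -/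
def GraphDB.IsWalk {V E S : Type} (G : GraphDB V E S) : V → List E → V → Prop
  | v, [], w => v = w
  | v, e :: es, w => G.src e = v ∧ G.IsWalk (G.tgt e) es w

/-- Distance (minimum number of edges over all walks), `⊤` if unreachable. -/
noncomputable def GraphDB.dist {V E S : Type} (G : GraphDB V E S) (v w : V) : ℕ∞ :=
  sInf {n : ℕ∞ | ∃ es : List E, G.IsWalk v es w ∧ (es.length : ℕ∞) = n}

/-- Edges of the product graph: pairs of a `G`-edge and a compatible transition. -/
def ProdE {V E Q S : Type} (G : GraphDB V E S) (A : NFAx Q S) : Type :=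
  {p : E × Q × S × Q // p.2 ∈ A.δ ∧ G.lab p.1 = p.2.2.1}

/-- The product graph `G×` of a graph database `G` and an NFA `A`. -/
def ProdGraph {V E Q S : Type} (G : GraphDB V E S) (A : NFAx Q S) :
    GraphDB (V × Q) (ProdE G A) S where
  src p := (G.src p.1.1, p.1.2.1)
  tgt p := (G.tgt p.1.1, p.1.2.2.2)
  lab p := G.lab p.1.1

/-- Projection of a product-graph edge to the underlying `G`-edge. -/
def projE {V E Q S : Type} {G : GraphDB V E S} {A : NFAx Q S} (p : ProdE G A) : E := p.1.1

/-- `A.RunStates q w qs qf`: `qs` is the full state sequence of a run on `w` from `q` to `qf`. -/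
inductive NFAx.RunStates {Q S : Type} (A : NFAx Q S) : Q → List S → List Q → Q → Prop
  | nil (q : Q) : A.RunStates q [] [q] q
  | cons {q q' qf : Q} {a : S} {w : List S} {qs : List Q} :
      (q, a, q') ∈ A.δ → A.RunStates q' w qs qf → A.RunStates q (a :: w) (q :: qs) qf

/-- `A` is unambiguous: every accepted word has exactly one accepting run (state sequence). -/
def NFAx.Unambiguous {Q S : Type} (A : NFAx Q S) : Prop :=
  ∀ (w : List S) (qs₁ qs₂ : List Q) (q₁ q₂ : Q), q₁ ∈ A.F → q₂ ∈ A.F →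
    A.RunStates A.q0 w qs₁ q₁ → A.RunStates A.q0 w qs₂ q₂ → qs₁ = qs₂

section Aux
variable {Q S : Type} {A : NFAx Q S}

theorem NFAx.run_exists_states {q q' : Q} {w : List S} (h : A.Run q w q') :
    ∃ qs, A.RunStates q w qs q' := by
  induction h with
  | nil q => exact ⟨[q], .nil q⟩
  | cons hδ _ ih => obtain ⟨qs, hqs⟩ := ih; exact ⟨_ :: qs, .cons hδ hqs⟩

theorem NFAx.runStates_length {q qf : Q} {w : List S} {qs : List Q}
    (h : A.RunStates q w qs qf) : qs.length = w.length + 1 := by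
  induction h with
  | nil => rfl
  | cons _ _ ih => simp [ih]

theorem NFAx.runStates_head {q qf : Q} {w : List S} {qs : List Q}
    (h : A.RunStates q w qs qf) : ∃ t, qs = q :: t := by
  cases h with
  | nil => exact ⟨[], rfl⟩
  | cons _ h => exact ⟨_, rfl⟩

theorem NFAx.runStates_append {q q₁ qf : Q} {u r : List S} {qs qs' : List Q}
    (h1 : A.RunStates q u qs q₁) (h2 : A.RunStates q₁ r qs' qf) :
    A.RunStates q (u ++ r) (qs.dropLast ++ qs') qf := by
  induction h1 with
  | nil => simpa using h2
  | cons hδ h ih =>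
      obtain ⟨t, rfl⟩ := NFAx.runStates_head h
      exact .cons hδ (ih h2)

theorem walk_runStates {V E : Type} {G : GraphDB V E S}
    (es : List (ProdE G A)) :
    ∀ (v : V) (q : Q) (v' : V) (q' : Q),
      (ProdGraph G A).IsWalk (v, q) es (v', q') →
      A.RunStates q (es.map fun p => G.lab (projE p))
        (q :: es.map fun p => p.1.2.2.2) q' := by
  induction es with
  | nil =>
      intro v q v' q' h
      have h' : (v, q) = (v', q') := h
      rw [Prod.mk.injEq] at h'
      obtain ⟨rfl, rfl⟩ := h'
      exact .nil q
  | cons p es ih =>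
      intro v q v' q' h
      obtain ⟨h1, h2⟩ := h
      obtain ⟨⟨e, qa, a, qb⟩, hδ, hlab⟩ := p
      have h1' : (G.src e, qa) = (v, q) := h1
      rw [Prod.mk.injEq] at h1'
      obtain ⟨-, rfl⟩ := h1'
      refine NFAx.RunStates.cons (a := G.lab e) ?_ (ih _ _ _ _ h2)
      have hla : G.lab e = a := hlab
      show (qa, G.lab e, qb) ∈ A.δ
      rw [hla]
      exact hδ

theorem walk_ext {V E : Type} {G : GraphDB V E S}
    (es₁ : List (ProdE G A)) :
    ∀ (es₂ : List (ProdE G A)) (v : V) (q : Q) (v' : V) (q' : Q),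
    (ProdGraph G A).IsWalk (v, q) es₁ (v', q') →
    (ProdGraph G A).IsWalk (v, q) es₂ (v', q') →
    es₁.map projE = es₂.map projE →
    es₁.map (fun p => p.1.2.2.2) = es₂.map (fun p => p.1.2.2.2) →
    es₁ = es₂ := by
  induction es₁ with
  | nil =>
      intro es₂ v q v' q' _ _ hm _
      cases es₂ with
      | nil => rfl
      | cons _ _ => simp at hm
  | cons p₁ es₁ ih =>
      intro es₂ v q v' q' h1 h2 hm ht
      cases es₂ with
      | nil => simp at hm
      | cons p₂ es₂ =>
          simp only [List.map_cons, List.cons.injEq] at hm ht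
          obtain ⟨hw1, hwr1⟩ := h1
          obtain ⟨hw2, hwr2⟩ := h2
          obtain ⟨⟨e₁, qa₁, a₁, qb₁⟩, hδ₁, hlab₁⟩ := p₁
          obtain ⟨⟨e₂, qa₂, a₂, qb₂⟩, hδ₂, hlab₂⟩ := p₂
          have he : e₁ = e₂ := hm.1
          have hb : qb₁ = qb₂ := ht.1
          subst he; subst hb
          have hw1' : (G.src e₁, qa₁) = (v, q) := hw1
          have hw2' : (G.src e₁, qa₂) = (v, q) := hw2
          rw [Prod.mk.injEq] at hw1' hw2'
          have hqa : qa₁ = qa₂ := hw1'.2.trans hw2'.2.symm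
          subst hqa
          have ha : a₁ = a₂ := by
            have h1 : G.lab e₁ = a₁ := hlab₁
            have h2 : G.lab e₁ = a₂ := hlab₂
            exact h1.symm.trans h2
          subst ha
          have hwr2' : (ProdGraph G A).IsWalk (G.tgt e₁, qb₁) es₂ (v', q') := hwr2
          have hes : es₁ = es₂ := ih es₂ _ _ _ _ hwr1 hwr2' hm.2 ht.2
          subst hes
          rfl

/-- for an unambiguous NFA with single final state, the state reached after
reading any prefix of an accepted word in the accepting run is uniquely determined; hence
distinct `G×`-paths to `(v', q_F)` project to distinct `G`-paths (no duplicates from run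

ambiguity in the backtracking). -/
theorem unambiguous_prefix_state_unique_and_proj_injective {V E Q S : Type}
    (G : GraphDB V E S) (A : NFAx Q S) (qF : Q) (hF : A.F = {qF}) (hU : A.Unambiguous)
    (v v' : V) :
    (∀ (u rest : List S) (q₁ q₂ : Q),
      A.Run A.q0 u q₁ → A.Run q₁ rest qF → A.Run A.q0 u q₂ → A.Run q₂ rest qF → q₁ = q₂) ∧
    (∀ es₁ es₂ : List (ProdE G A),
      (ProdGraph G A).IsWalk (v, A.q0) es₁ (v', qF) →
      (ProdGraph G A).IsWalk (v, A.q0) es₂ (v', qF) →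
      es₁.map projE = es₂.map projE → es₁ = es₂) := by
  have hqF : qF ∈ A.F := by rw [hF]; rfl
  have part1 : ∀ (u rest : List S) (q₁ q₂ : Q),
      A.Run A.q0 u q₁ → A.Run q₁ rest qF → A.Run A.q0 u q₂ → A.Run q₂ rest qF → q₁ = q₂ := by
    intro u rest q₁ q₂ h1 h2 h3 h4
    obtain ⟨qa, ha⟩ := NFAx.run_exists_states h1
    obtain ⟨qb, hb⟩ := NFAx.run_exists_states h2
    obtain ⟨qc, hc⟩ := NFAx.run_exists_states h3
    obtain ⟨qd, hd⟩ := NFAx.run_exists_states h4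
    have heq := hU _ _ _ _ _ hqF hqF (NFAx.runStates_append ha hb)
      (NFAx.runStates_append hc hd)
    have hlen : qa.dropLast.length = qc.dropLast.length := by
      simp [NFAx.runStates_length ha, NFAx.runStates_length hc]
    have hbd : qb = qd := (List.append_inj heq hlen).2
    obtain ⟨t, rfl⟩ := NFAx.runStates_head hb
    obtain ⟨t', rfl⟩ := NFAx.runStates_head hd
    exact (List.cons.injEq .. ▸ hbd).1
  refine ⟨part1, ?_⟩
  intro es₁ es₂ h1 h2 hm
  have hr1 := walk_runStates (A := A) es₁ v A.q0 v' qF h1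
  have hr2 := walk_runStates (A := A) es₂ v A.q0 v' qF h2
  have hw : (es₁.map fun p => G.lab (projE p)) = es₂.map fun p => G.lab (projE p) := by
    have : (es₁.map projE).map G.lab = (es₂.map projE).map G.lab := by rw [hm]
    simpa [List.map_map, Function.comp_def] using this
  rw [hw] at hr1
  have hts := hU _ _ _ _ _ hqF hqF hr1 hr2
  have hts' : (es₁.map fun p => p.1.2.2.2) = es₂.map fun p => p.1.2.2.2 :=
    (List.cons.injEq .. ▸ hts).2
  exact walk_ext es₁ es₂ v A.q0 v' qF h1 h2 hm hts'
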